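/- The sliding-integral operator (T y)(t) = ∫_{t−τ(t)}^{t} y(s) ds, where τ : ℝ → [0, τ̄] is measurable, has induced L²(ℝ) gain at most τ̄: ‖T y‖_{L²(ℝ)} ≤ τ̄ ‖y‖_{L²(ℝ)} for all y ∈ L²(ℝ, ℝⁿ). -/

import Mathlib

open MeasureTheory intervalIntegral Set

private theorem csq_aux (ν : Measure ℝ) (g : ℝ → ENNReal) (hg : AEMeasurable g ν) :
    (∫⁻ x, g x ∂ν) ^ 2 ≤ ν univ * ∫⁻ x, g x ^ 2 ∂ν := by
  have hpq : Real.HolderConjugate 2 2 := by constructor <;> norm_num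
  have h := ENNReal.lintegral_mul_le_Lp_mul_Lq ν hpq aemeasurable_const hg (f := fun _ => 1)
  simp only [Pi.mul_apply, one_mul] at h
  have h2 : (∫⁻ x, g x ∂ν) ^ 2 ≤
      ((∫⁻ _x, (1:ENNReal) ^ (2:ℝ) ∂ν) ^ (1/(2:ℝ)) * (∫⁻ x, g x ^ (2:ℝ) ∂ν) ^ (1/(2:ℝ))) ^ 2 := by
    gcongr
  refine h2.trans_eq ?_
  rw [mul_pow, ← ENNReal.rpow_natCast (_ ^ (1/(2:ℝ))) 2, ← ENNReal.rpow_natCast (_ ^ (1/(2:ℝ))) 2,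
    ← ENNReal.rpow_mul, ← ENNReal.rpow_mul]
  norm_num

/-- The sliding-integral operator `(T y)(t) = ∫_{t-τ(t)}^{t} y(s) ds`, with
`τ : ℝ → [0, τ̄]` measurable, has induced `L²(ℝ)` gain at most `τ̄`. -/
theorem sliding_integral_l2_gain {n : ℕ}
    (τbar : ℝ) (hτbar : 0 < τbar)
    (τ : ℝ → ℝ) (hτ : Measurable τ) (hτ0 : ∀ t, 0 ≤ τ t) (hτb : ∀ t, τ t ≤ τbar)
    (y : ℝ → EuclideanSpace ℝ (Fin n)) (hy : MemLp y 2 (volume : Measure ℝ)) :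
    Real.sqrt (∫ t : ℝ, ‖∫ s in (t - τ t)..t, y s‖ ^ 2) ≤
      τbar * Real.sqrt (∫ s : ℝ, ‖y s‖ ^ 2) := by
  set μ := (volume : Measure ℝ)
  set g : ℝ → EuclideanSpace ℝ (Fin n) := fun t => ∫ s in (t - τ t)..t, y s with hgdef
  set f : ℝ → ENNReal := fun s => (‖y s‖₊ : ENNReal) ^ 2 with hfdef
  have hym : AEMeasurable (fun s => (‖y s‖₊ : ENNReal)) μ := hy.aestronglyMeasurable.aemeasurable.enorm
  have hfm : AEMeasurable f μ := hym.pow_const 2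
  have hI0 : 0 ≤ ∫ s, ‖y s‖ ^ 2 ∂μ := integral_nonneg fun s => sq_nonneg _
  -- ∫⁻ f = ofReal (∫ ‖y‖²)
  have hInt : Integrable (fun s => ‖y s‖ ^ 2) μ := by
    have h := hy.integrable_norm_rpow (by norm_num) (by norm_num)
    simpa [ENNReal.toReal_ofNat, Real.rpow_natCast] using h
  have hIeq : ∫⁻ s, f s ∂μ = ENNReal.ofReal (∫ s, ‖y s‖ ^ 2 ∂μ) := by
    rw [ofReal_integral_eq_lintegral_ofReal hInt (Filter.Eventually.of_forall fun s => sq_nonneg _)]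
    refine lintegral_congr fun s => ?_
    rw [hfdef, ENNReal.ofReal_pow (norm_nonneg _), ofReal_norm, enorm_eq_nnnorm]
  -- pointwise bound
  have key : ∀ t, (‖g t‖₊ : ENNReal) ^ 2 ≤
      ENNReal.ofReal τbar * ∫⁻ s in Ioc (t - τbar) t, f s ∂μ := by
    intro t
    have h1 : t - τ t ≤ t := by linarith [hτ0 t]
    have hgt : g t = ∫ s in Ioc (t - τ t) t, y s ∂μ := integral_of_le h1
    calc (‖g t‖₊ : ENNReal) ^ 2
        ≤ (∫⁻ s in Ioc (t - τ t) t, ‖y s‖₊ ∂μ) ^ 2 := by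
          rw [hgt]; gcongr; exact enorm_integral_le_lintegral_enorm _
      _ ≤ (μ.restrict (Ioc (t - τ t) t)) univ * ∫⁻ s in Ioc (t - τ t) t, f s ∂μ :=
          csq_aux _ _ hym.restrict
      _ ≤ ENNReal.ofReal τbar * ∫⁻ s in Ioc (t - τbar) t, f s ∂μ := by
          gcongr
          · rw [Measure.restrict_apply_univ, Real.volume_Ioc]
            exact ENNReal.ofReal_le_ofReal (by linarith [hτb t])
          · exact hτb t
  -- Fubini
  have hswap : ∫⁻ t, ∫⁻ s in Ioc (t - τbar) t, f s ∂μ ∂μ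
      = ENNReal.ofReal τbar * ∫⁻ s, f s ∂μ := by
    have hB : MeasurableSet {p : ℝ × ℝ | p.1 - τbar < p.2 ∧ p.2 ≤ p.1} :=
      (measurableSet_lt (measurable_fst.sub measurable_const) measurable_snd).inter
        (measurableSet_le measurable_snd measurable_fst)
    have hF : AEMeasurable (Function.uncurry fun t s => (Ioc (t - τbar) t).indicator f s)
        (μ.prod μ) := by
      have : (Function.uncurry fun t s => (Ioc (t - τbar) t).indicator f s)
          = Set.indicator {p : ℝ × ℝ | p.1 - τbar < p.2 ∧ p.2 ≤ p.1} (fun p => f p.2) := by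
        funext p
        simp [Function.uncurry, Set.indicator_apply, Set.mem_Ioc]
      rw [this]
      exact (hfm.comp_quasiMeasurePreserving Measure.quasiMeasurePreserving_snd).indicator hB
    calc ∫⁻ t, ∫⁻ s in Ioc (t - τbar) t, f s ∂μ ∂μ
        = ∫⁻ t, ∫⁻ s, (Ioc (t - τbar) t).indicator f s ∂μ ∂μ := by
          refine lintegral_congr fun t => (lintegral_indicator measurableSet_Ioc f).symm
      _ = ∫⁻ s, ∫⁻ t, (Ioc (t - τbar) t).indicator f s ∂μ ∂μ :=
          lintegral_lintegral_swap hF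
      _ = ∫⁻ s, f s * ENNReal.ofReal τbar ∂μ := by
          refine lintegral_congr fun s => ?_
          have hind : ∀ t, (Ioc (t - τbar) t).indicator f s
              = (Ico s (s + τbar)).indicator (fun _ => f s) t := by
            intro t
            simp only [Set.indicator_apply, Set.mem_Ioc, Set.mem_Ico]
            refine if_congr ?_ rfl rfl
            constructor
            · rintro ⟨h1, h2⟩; exact ⟨h2, by linarith⟩
            · rintro ⟨h1, h2⟩; exact ⟨by linarith, h1⟩
          simp only [hind]
          rw [lintegral_indicator_const measurableSet_Ico, Real.volume_Ico,
            add_sub_cancel_left, mul_comm]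
      _ = ENNReal.ofReal τbar * ∫⁻ s, f s ∂μ := by
          rw [lintegral_mul_const'' _ hfm, mul_comm]
  -- measurability of g
  have hg : AEStronglyMeasurable g μ := by
    have hB : MeasurableSet {p : ℝ × ℝ | p.1 - τ p.1 < p.2 ∧ p.2 ≤ p.1} :=
      (measurableSet_lt (measurable_fst.sub (hτ.comp measurable_fst)) measurable_snd).inter
        (measurableSet_le measurable_snd measurable_fst)
    have hF : AEStronglyMeasurable
        (fun p : ℝ × ℝ => Set.indicator {q : ℝ × ℝ | q.1 - τ q.1 < q.2 ∧ q.2 ≤ q.1}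
          (fun q => y q.2) p) (μ.prod μ) :=
      (hy.aestronglyMeasurable.comp_quasiMeasurePreserving
        Measure.quasiMeasurePreserving_snd).indicator hB
    refine hF.integral_prod_right'.congr (Filter.Eventually.of_forall fun t => ?_)
    have h1 : t - τ t ≤ t := by linarith [hτ0 t]
    have : (fun s => Set.indicator {q : ℝ × ℝ | q.1 - τ q.1 < q.2 ∧ q.2 ≤ q.1}
        (fun q => y q.2) (t, s)) = (Ioc (t - τ t) t).indicator y := by
      funext s
      simp [Set.indicator_apply, Set.mem_Ioc]
    beta_reduce
    rw [this, MeasureTheory.integral_indicator measurableSet_Ioc, hgdef]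
    exact (integral_of_le h1).symm
  -- assemble
  have hgm2 : AEMeasurable (fun t => (‖g t‖₊ : ENNReal) ^ 2) μ := hg.aemeasurable.enorm.pow_const 2
  have main : ∫⁻ t, (‖g t‖₊ : ENNReal) ^ 2 ∂μ
      ≤ ENNReal.ofReal (τbar ^ 2 * ∫ s, ‖y s‖ ^ 2 ∂μ) := by
    calc ∫⁻ t, (‖g t‖₊ : ENNReal) ^ 2 ∂μ
        ≤ ∫⁻ t, ENNReal.ofReal τbar * ∫⁻ s in Ioc (t - τbar) t, f s ∂μ ∂μ :=
          lintegral_mono key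
      _ = ENNReal.ofReal τbar * ∫⁻ t, ∫⁻ s in Ioc (t - τbar) t, f s ∂μ ∂μ :=
          lintegral_const_mul' _ _ ENNReal.ofReal_ne_top
      _ = ENNReal.ofReal τbar * (ENNReal.ofReal τbar * ENNReal.ofReal (∫ s, ‖y s‖ ^ 2 ∂μ)) := by
          rw [hswap, hIeq]
      _ = ENNReal.ofReal (τbar ^ 2 * ∫ s, ‖y s‖ ^ 2 ∂μ) := by
          rw [← ENNReal.ofReal_mul hτbar.le, ← ENNReal.ofReal_mul (by positivity), ← mul_assoc, sq]
  have hLHS : ∫ t, ‖g t‖ ^ 2 ∂μ ≤ τbar ^ 2 * ∫ s, ‖y s‖ ^ 2 ∂μ := by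
    rw [integral_eq_lintegral_of_nonneg_ae (Filter.Eventually.of_forall fun t => sq_nonneg _)
      (hg.norm.pow 2)]
    have heq : ∫⁻ t, ENNReal.ofReal (‖g t‖ ^ 2) ∂μ = ∫⁻ t, (‖g t‖₊ : ENNReal) ^ 2 ∂μ := by
      refine lintegral_congr fun t => ?_
      rw [ENNReal.ofReal_pow (norm_nonneg _), ofReal_norm, enorm_eq_nnnorm]
    rw [heq]
    calc (∫⁻ t, (‖g t‖₊ : ENNReal) ^ 2 ∂μ).toReal
        ≤ (ENNReal.ofReal (τbar ^ 2 * ∫ s, ‖y s‖ ^ 2 ∂μ)).toReal :=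
          ENNReal.toReal_mono ENNReal.ofReal_ne_top main
      _ = τbar ^ 2 * ∫ s, ‖y s‖ ^ 2 ∂μ := ENNReal.toReal_ofReal (by positivity)
  calc Real.sqrt (∫ t, ‖g t‖ ^ 2 ∂μ)
      ≤ Real.sqrt (τbar ^ 2 * ∫ s, ‖y s‖ ^ 2 ∂μ) := Real.sqrt_le_sqrt hLHS
    _ = τbar * Real.sqrt (∫ s, ‖y s‖ ^ 2 ∂μ) := by
        rw [Real.sqrt_mul (sq_nonneg _), Real.sqrt_sq hτbar.le]
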